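/- For any set partition π of [n], the number of singular pairs satisfies |Sing(π)| = 2(dim(π) − d(π)) − crs(π). -/

import Mathlib

open scoped BigOperators
open Finset Classical

/-- Two indices lie in the same block of the set partition `P` of `[n]`. -/
def SameBlock {n : ℕ} (P : Finpartition (Finset.univ : Finset (Fin n))) (i j : Fin n) : Prop :=
  ∃ B ∈ P.parts, i ∈ B ∧ j ∈ B

/-- `(i,j)` is an arc of `P`: same block, `i < j`, no element of that block strictly between. -/
def IsArc {n : ℕ} (P : Finpartition (Finset.univ : Finset (Fin n))) (i j : Fin n) : Prop :=
  i < j ∧ SameBlock P i j ∧ ∀ k : Fin n, i < k → k < j → ¬ SameBlock P i k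

/-- The set of arcs `D(π)`. -/
noncomputable def arcs {n : ℕ} (P : Finpartition (Finset.univ : Finset (Fin n))) :
    Finset (Fin n × Fin n) :=
  Finset.univ.filter (fun p => IsArc P p.1 p.2)

/-- `d(π)`, the number of arcs. -/
noncomputable def dP {n : ℕ} (P : Finpartition (Finset.univ : Finset (Fin n))) : ℕ :=
  (arcs P).card

/-- `dim(π) = Σ_{(i,j) ∈ D(π)} (j - i)`. -/
noncomputable def dimP {n : ℕ} (P : Finpartition (Finset.univ : Finset (Fin n))) : ℕ :=
  ∑ p ∈ arcs P, (p.2.val - p.1.val)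

/-- `crs(π)`, the number of crossings, i.e. pairs of arcs `(i,j), (k,l)` with `i<k<j<l`. -/
noncomputable def crsP {n : ℕ} (P : Finpartition (Finset.univ : Finset (Fin n))) : ℕ :=
  (((arcs P) ×ˢ (arcs P)).filter
    (fun q => q.1.1 < q.2.1 ∧ q.2.1 < q.1.2 ∧ q.1.2 < q.2.2)).card

/-- `(i,j)` is a `π`-singular pair. -/
def SingularPair {n : ℕ} (P : Finpartition (Finset.univ : Finset (Fin n))) (i j : Fin n) : Prop :=
  i < j ∧ ((∃ k : Fin n, k < i ∧ IsArc P k j) ∨ (∃ l : Fin n, j < l ∧ IsArc P i l))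

/-- `(i,j)` is a `π`-regular pair. -/
def RegularPair {n : ℕ} (P : Finpartition (Finset.univ : Finset (Fin n))) (i j : Fin n) : Prop :=
  i < j ∧ ¬ ((∃ k : Fin n, k < i ∧ IsArc P k j) ∨ (∃ l : Fin n, j < l ∧ IsArc P i l))

/-- The set `Sing(π)` of singular pairs. -/
noncomputable def singP {n : ℕ} (P : Finpartition (Finset.univ : Finset (Fin n))) :
    Finset (Fin n × Fin n) :=
  Finset.univ.filter (fun p => SingularPair P p.1 p.2)

/-- The set `reg(π)` of regular pairs. -/
noncomputable def regP {n : ℕ} (P : Finpartition (Finset.univ : Finset (Fin n))) :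
    Finset (Fin n × Fin n) :=
  Finset.univ.filter (fun p => RegularPair P p.1 p.2)

namespace Stmt10Aux

variable {n : ℕ} (P : Finpartition (Finset.univ : Finset (Fin n)))

lemma sameBlock_symm {i j : Fin n} (h : SameBlock P i j) : SameBlock P j i := by
  obtain ⟨B, hB, hi, hj⟩ := h; exact ⟨B, hB, hj, hi⟩

lemma sameBlock_trans {i j k : Fin n} (h1 : SameBlock P i j) (h2 : SameBlock P j k) :
    SameBlock P i k := by
  obtain ⟨B, hB, hi, hj⟩ := h1
  obtain ⟨C, hC, hj', hk⟩ := h2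
  exact ⟨B, hB, hi, (P.eq_of_mem_parts hC hB hj' hj) ▸ hk⟩

lemma arc_left_unique {i j l : Fin n} (h1 : IsArc P i j) (h2 : IsArc P i l) : j = l := by
  rcases lt_trichotomy j l with h | h | h
  · exact absurd h1.2.1 (h2.2.2 j h1.1 h)
  · exact h
  · exact absurd h2.2.1 (h1.2.2 l h2.1 h)

lemma arc_right_unique {i j k : Fin n} (h1 : IsArc P i j) (h2 : IsArc P k j) : i = k := by
  rcases lt_trichotomy i k with h | h | h
  · exact absurd (sameBlock_trans P h1.2.1 (sameBlock_symm P h2.2.1)) (h1.2.2 k h h2.1)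
  · exact h
  · exact absurd (sameBlock_trans P h2.2.1 (sameBlock_symm P h1.2.1)) (h2.2.2 i h h1.1)

lemma mem_arcs {a : Fin n × Fin n} : a ∈ arcs P ↔ IsArc P a.1 a.2 := by
  simp [arcs]

/-- `p` is a singular pair "witnessed by" the arc `a`. -/
def inS (p a : Fin n × Fin n) : Prop :=
  (p.1 = a.1 ∧ a.1 < p.2 ∧ p.2 < a.2) ∨ (p.2 = a.2 ∧ a.1 < p.1 ∧ p.1 < a.2)

noncomputable def f1 (p : Fin n × Fin n) : Finset (Fin n × Fin n) :=
  (arcs P).filter (fun a => p.1 = a.1 ∧ a.1 < p.2 ∧ p.2 < a.2)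

noncomputable def f2 (p : Fin n × Fin n) : Finset (Fin n × Fin n) :=
  (arcs P).filter (fun a => p.2 = a.2 ∧ a.1 < p.1 ∧ p.1 < a.2)

noncomputable def m (p : Fin n × Fin n) : ℕ := (f1 P p).card + (f2 P p).card

lemma f1_card_le (p : Fin n × Fin n) : (f1 P p).card ≤ 1 := by
  refine Finset.card_le_one.2 ?_
  rintro a ha b hb
  rw [f1, Finset.mem_filter, mem_arcs] at ha hb
  have h1 : a.1 = b.1 := ha.2.1 ▸ hb.2.1 ▸ rfl
  have h2 : a.2 = b.2 := arc_left_unique P ha.1 (h1 ▸ hb.1)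
  exact Prod.ext h1 h2

lemma f2_card_le (p : Fin n × Fin n) : (f2 P p).card ≤ 1 := by
  refine Finset.card_le_one.2 ?_
  rintro a ha b hb
  rw [f2, Finset.mem_filter, mem_arcs] at ha hb
  have h2 : a.2 = b.2 := ha.2.1 ▸ hb.2.1 ▸ rfl
  have h1 : a.1 = b.1 := arc_right_unique P ha.1 (h2 ▸ hb.1)
  exact Prod.ext h1 h2

lemma m_eq_card (p : Fin n × Fin n) :
    m P p = ((arcs P).filter (fun a => inS p a)).card := by
  have hdisj : Disjoint (f1 P p) (f2 P p) := by
    rw [Finset.disjoint_left]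
    rintro a ha hb
    rw [f1, Finset.mem_filter] at ha
    rw [f2, Finset.mem_filter] at hb
    exact absurd (ha.2.1 ▸ hb.2.2.1) (lt_irrefl _)
  rw [m, ← Finset.card_union_of_disjoint hdisj]
  congr 1
  rw [f1, f2, ← Finset.filter_or]
  exact Finset.filter_congr (fun a _ => by simp [inS])

lemma m_le_two (p : Fin n × Fin n) : m P p ≤ 2 := by
  have := f1_card_le P p; have := f2_card_le P p; rw [m]; omega

lemma one_le_m_iff (p : Fin n × Fin n) :
    1 ≤ m P p ↔ ∃ a ∈ arcs P, inS p a := by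
  rw [m_eq_card, Nat.one_le_iff_ne_zero, ← Nat.pos_iff_ne_zero, Finset.card_pos]
  constructor
  · rintro ⟨a, ha⟩
    rw [Finset.mem_filter] at ha
    exact ⟨a, ha.1, ha.2⟩
  · rintro ⟨a, ha, h⟩
    exact ⟨a, Finset.mem_filter.2 ⟨ha, h⟩⟩

lemma singular_iff (p : Fin n × Fin n) :
    SingularPair P p.1 p.2 ↔ ∃ a ∈ arcs P, inS p a := by
  constructor
  · rintro ⟨hlt, ⟨k, hk, harc⟩ | ⟨l, hl, harc⟩⟩
    · exact ⟨(k, p.2), (mem_arcs P).2 harc, Or.inr ⟨rfl, hk, hlt⟩⟩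
    · exact ⟨(p.1, l), (mem_arcs P).2 harc, Or.inl ⟨rfl, hlt, hl⟩⟩
  · rintro ⟨a, ha, ⟨h1, h2, h3⟩ | ⟨h1, h2, h3⟩⟩
    · exact ⟨h1 ▸ h2, Or.inr ⟨a.2, h3, h1 ▸ (mem_arcs P).1 ha⟩⟩
    · exact ⟨h1 ▸ h3, Or.inl ⟨a.1, h2, h1 ▸ (mem_arcs P).1 ha⟩⟩

lemma card_inS_filter (a : Fin n × Fin n) (ha : a.1 < a.2) :
    ((Finset.univ : Finset (Fin n × Fin n)).filter (fun p => inS p a)).card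
      = 2 * (a.2.val - a.1.val - 1) := by
  have hset : (Finset.univ : Finset (Fin n × Fin n)).filter (fun p => inS p a)
      = ((Finset.Ioo a.1 a.2).image (fun t => (a.1, t)))
        ∪ ((Finset.Ioo a.1 a.2).image (fun s => (s, a.2))) := by
    ext p
    rw [Finset.mem_filter]
    simp only [Finset.mem_filter, Finset.mem_univ, true_and, Finset.mem_union,
      Finset.mem_image, Finset.mem_Ioo, inS, Prod.ext_iff]
    constructor
    · rintro (⟨h1, h2, h3⟩ | ⟨h1, h2, h3⟩)
      · exact Or.inl ⟨p.2, ⟨h2, h3⟩, h1.symm, rfl⟩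
      · exact Or.inr ⟨p.1, ⟨h2, h3⟩, rfl, h1.symm⟩
    · rintro (⟨t, ⟨h2, h3⟩, h4, h5⟩ | ⟨t, ⟨h2, h3⟩, h4, h5⟩)
      · exact Or.inl ⟨h4.symm, h5 ▸ h2, h5 ▸ h3⟩
      · exact Or.inr ⟨h5.symm, h4 ▸ h2, h4 ▸ h3⟩
  have hdisj : Disjoint ((Finset.Ioo a.1 a.2).image (fun t => (a.1, t)))
      ((Finset.Ioo a.1 a.2).image (fun s => (s, a.2))) := by
    rw [Finset.disjoint_left]
    rintro p hp hq
    simp only [Finset.mem_image, Finset.mem_Ioo, Prod.ext_iff] at hp hq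
    obtain ⟨t, ⟨ht1, _⟩, h1, h2⟩ := hp
    obtain ⟨s, ⟨hs1, _⟩, h3, h4⟩ := hq
    exact absurd (h3 ▸ h1.symm ▸ hs1) (lt_irrefl _)
  have hinj1 : Set.InjOn (fun t : Fin n => (a.1, t)) ↑(Finset.Ioo a.1 a.2) := by
    intro x _ y _ h; exact (Prod.ext_iff.1 h).2
  have hinj2 : Set.InjOn (fun s : Fin n => (s, a.2)) ↑(Finset.Ioo a.1 a.2) := by
    intro x _ y _ h; exact (Prod.ext_iff.1 h).1
  rw [hset, Finset.card_union_of_disjoint hdisj, Finset.card_image_of_injOn hinj1,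
    Finset.card_image_of_injOn hinj2, Fin.card_Ioo]
  omega

lemma sum_m : ∑ p : Fin n × Fin n, m P p
    = ∑ a ∈ arcs P, 2 * (a.2.val - a.1.val - 1) := by
  have h1 : ∀ p : Fin n × Fin n, m P p = ∑ a ∈ arcs P, if inS p a then 1 else 0 := by
    intro p; rw [m_eq_card, Finset.card_filter]
  calc ∑ p : Fin n × Fin n, m P p
      = ∑ p : Fin n × Fin n, ∑ a ∈ arcs P, if inS p a then 1 else 0 := by
        exact Finset.sum_congr rfl (fun p _ => h1 p)
    _ = ∑ a ∈ arcs P, ∑ p : Fin n × Fin n, if inS p a then 1 else 0 := Finset.sum_comm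
    _ = ∑ a ∈ arcs P, 2 * (a.2.val - a.1.val - 1) := by
        refine Finset.sum_congr rfl (fun a ha => ?_)
        rw [← Finset.card_filter]
        exact card_inS_filter a ((mem_arcs P).1 ha).1

lemma crs_eq : crsP P
    = ((Finset.univ : Finset (Fin n × Fin n)).filter (fun p => m P p = 2)).card := by
  rw [crsP]
  refine Finset.card_bij (fun q _ => (q.2.1, q.1.2)) ?_ ?_ ?_
  · rintro q hq
    simp only [Finset.mem_filter, Finset.mem_product] at hq
    obtain ⟨⟨ha, hb⟩, h1, h2, h3⟩ := hq
    have hf1 : q.2 ∈ f1 P (q.2.1, q.1.2) := by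
      rw [f1, Finset.mem_filter]; exact ⟨hb, rfl, h2, h3⟩
    have hf2 : q.1 ∈ f2 P (q.2.1, q.1.2) := by
      rw [f2, Finset.mem_filter]; exact ⟨ha, rfl, h1, h2⟩
    have c1 : 1 ≤ (f1 P (q.2.1, q.1.2)).card := Finset.card_pos.2 ⟨_, hf1⟩
    have c2 : 1 ≤ (f2 P (q.2.1, q.1.2)).card := Finset.card_pos.2 ⟨_, hf2⟩
    have d1 := f1_card_le P (q.2.1, q.1.2)
    have d2 := f2_card_le P (q.2.1, q.1.2)
    rw [Finset.mem_filter]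
    simp only [Finset.mem_filter, Finset.mem_univ, true_and, m]
    omega
  · rintro q hq q' hq' heq
    simp only [Prod.mk.injEq] at heq
    obtain ⟨e1, e2⟩ := heq
    simp only [Finset.mem_filter, Finset.mem_product] at hq hq'
    obtain ⟨⟨ha, hb⟩, h1, h2, h3⟩ := hq
    obtain ⟨⟨ha', hb'⟩, h1', h2', h3'⟩ := hq'
    have hf1 : q.2 ∈ f1 P (q.2.1, q.1.2) := by
      rw [f1, Finset.mem_filter]; exact ⟨hb, rfl, h2, h3⟩
    have hf1' : q'.2 ∈ f1 P (q.2.1, q.1.2) := by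
      rw [f1, Finset.mem_filter]
      refine ⟨hb', e1, ?_, ?_⟩
      · rw [e2]; exact h2'
      · rw [e2]; exact h3'
    have hf2 : q.1 ∈ f2 P (q.2.1, q.1.2) := by
      rw [f2, Finset.mem_filter]; exact ⟨ha, rfl, h1, h2⟩
    have hf2' : q'.1 ∈ f2 P (q.2.1, q.1.2) := by
      rw [f2, Finset.mem_filter]
      refine ⟨ha', e2, ?_, ?_⟩
      · rw [e1]; exact h1'
      · rw [e1]; exact h2'
    have := Finset.card_le_one.1 (f1_card_le P (q.2.1, q.1.2)) _ hf1 _ hf1'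
    have := Finset.card_le_one.1 (f2_card_le P (q.2.1, q.1.2)) _ hf2 _ hf2'
    exact Prod.ext ‹q.1 = q'.1› ‹q.2 = q'.2›
  · rintro p hp
    rw [Finset.mem_filter] at hp
    simp only [Finset.mem_filter, Finset.mem_univ, true_and, m] at hp
    have d1 := f1_card_le P p
    have d2 := f2_card_le P p
    have c1 : (f1 P p).Nonempty := Finset.card_pos.1 (by omega)
    have c2 : (f2 P p).Nonempty := Finset.card_pos.1 (by omega)
    obtain ⟨b, hb⟩ := c1
    obtain ⟨a, ha⟩ := c2
    rw [f1, Finset.mem_filter] at hb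
    rw [f2, Finset.mem_filter] at ha
    refine ⟨(a, b), ?_, ?_⟩
    · simp only [Finset.mem_filter, Finset.mem_product]
      refine ⟨⟨ha.1, hb.1⟩, ?_, ?_, ?_⟩
      · rw [← hb.2.1]; exact ha.2.2.1
      · rw [← hb.2.1]; exact ha.2.2.2
      · rw [← ha.2.1]; exact hb.2.2.2
    · exact Prod.ext hb.2.1.symm ha.2.1.symm

lemma key_count : ((singP P).card : ℕ) + crsP P = ∑ p : Fin n × Fin n, m P p := by
  have hterm : ∀ p : Fin n × Fin n,
      m P p = (if 1 ≤ m P p then 1 else 0) + (if m P p = 2 then 1 else 0) := by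
    intro p
    have := m_le_two P p
    split_ifs <;> omega
  have hs : singP P = Finset.univ.filter (fun p => 1 ≤ m P p) := by
    ext p
    simp only [singP, Finset.mem_filter, Finset.mem_univ, true_and]
    rw [show (SingularPair P p.1 p.2) ↔ _ from singular_iff P p, ← one_le_m_iff]
  rw [Finset.sum_congr rfl (fun p _ => hterm p), Finset.sum_add_distrib,
    ← Finset.card_filter, ← Finset.card_filter, ← hs, ← crs_eq]

end Stmt10Aux

/-- `|Sing(π)| = 2(dim(π) − d(π)) − crs(π)`. -/
theorem stmt10 (n : ℕ) (P : Finpartition (Finset.univ : Finset (Fin n))) :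
    ((singP P).card : ℤ) = 2 * ((dimP P : ℤ) - (dP P : ℤ)) - (crsP P : ℤ) := by
  have key := Stmt10Aux.key_count P
  have hsum := Stmt10Aux.sum_m P
  have hcast : (((singP P).card : ℕ) + crsP P : ℤ)
      = ∑ a ∈ arcs P, (2 * ((a.2.val : ℤ) - (a.1.val : ℤ)) - 2) := by
    rw [← Nat.cast_add, key, hsum, Nat.cast_sum]
    refine Finset.sum_congr rfl (fun a ha => ?_)
    have hlt : a.1.val < a.2.val := ((Stmt10Aux.mem_arcs P).1 ha).1
    omega
  have hdim : (dimP P : ℤ) = ∑ a ∈ arcs P, ((a.2.val : ℤ) - (a.1.val : ℤ)) := by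
    rw [dimP]
    push_cast [Nat.cast_sum]
    refine Finset.sum_congr rfl (fun a ha => ?_)
    have hlt : a.1.val < a.2.val := ((Stmt10Aux.mem_arcs P).1 ha).1
    omega
  have hsplit : ∑ a ∈ arcs P, (2 * ((a.2.val : ℤ) - (a.1.val : ℤ)) - 2)
      = 2 * (dimP P : ℤ) - 2 * (dP P : ℤ) := by
    rw [Finset.sum_sub_distrib, ← Finset.mul_sum, ← hdim, Finset.sum_const, dP]
    push_cast
    ring
  rw [hsplit] at hcast
  push_cast at hcast
  linarith
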